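/- arXiv:1610.09834 — 4 statements merged into one kernel-verified Lean document; each statement's English description precedes it below -/
import Mathlib

section
/- For every matrix M ∈ SL(2,ℤ) there exists exactly one reduced word w over the two-letter alphabet {s,r} such that φ(w) = M or φ(w) = -M; here a word over {s,r} is called reduced if it contains no occurrence of the factor ss and no occurrence of the factor rrr. -/
/-- The matrix `S = [[0,-1],[1,0]]` as an element of `SL(2,ℤ)`. -/
def Smat : Matrix.SpecialLinearGroup (Fin 2) ℤ :=
  ⟨!![0, -1; 1, 0], by norm_num [Matrix.det_fin_two_of]⟩

/-- The matrix `R = [[0,-1],[1,1]]` as an element of `SL(2,ℤ)`. -/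
def Rmat : Matrix.SpecialLinearGroup (Fin 2) ℤ :=
  ⟨!![0, -1; 1, 1], by norm_num [Matrix.det_fin_two_of]⟩

instance : Fact (Even (Fintype.card (Fin 2))) := ⟨by simp⟩

/-- The alphabet `{s, r}`: `false` stands for the letter `s`, `true` for the letter `r`. -/
abbrev SRletter := Bool

/-- The monoid homomorphism `φ : {s,r}* → SL(2,ℤ)` with `φ(s) = S`, `φ(r) = R`. -/
noncomputable def phi : FreeMonoid SRletter →* Matrix.SpecialLinearGroup (Fin 2) ℤ :=
  FreeMonoid.lift (fun c => if c then Rmat else Smat)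

/-- A word over `{s,r}` is reduced if it contains no factor `ss` and no factor `rrr`. -/
def IsReducedWord (w : FreeMonoid SRletter) : Prop :=
  ¬ ([false, false] <:+: FreeMonoid.toList w) ∧
    ¬ ([true, true, true] <:+: FreeMonoid.toList w)

namespace SR
abbrev SL2 := Matrix.SpecialLinearGroup (Fin 2) ℤ
def Tmat : SL2 := ⟨!![1,1;0,1], by norm_num [Matrix.det_fin_two_of]⟩
def Lmat : SL2 := ⟨!![1,0;1,1], by norm_num [Matrix.det_fin_two_of]⟩
def Tz (b : ℤ) : SL2 := ⟨!![1,b;0,1], by norm_num [Matrix.det_fin_two_of]⟩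

lemma mul_coe (X Y : SL2) : ((X*Y : SL2) : Matrix (Fin 2) (Fin 2) ℤ) =
    !![X.1 0 0 * Y.1 0 0 + X.1 0 1 * Y.1 1 0, X.1 0 0 * Y.1 0 1 + X.1 0 1 * Y.1 1 1;
       X.1 1 0 * Y.1 0 0 + X.1 1 1 * Y.1 1 0, X.1 1 0 * Y.1 0 1 + X.1 1 1 * Y.1 1 1] := by
  rw [Matrix.SpecialLinearGroup.coe_mul]
  conv_lhs => rw [Matrix.eta_fin_two (X : Matrix (Fin 2) (Fin 2) ℤ),
    Matrix.eta_fin_two (Y : Matrix (Fin 2) (Fin 2) ℤ)]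
  rw [Matrix.mul_fin_two]

lemma one_coe : ((1 : SL2) : Matrix (Fin 2) (Fin 2) ℤ) = !![1,0;0,1] := by
  rw [Matrix.SpecialLinearGroup.coe_one]; ext i j; fin_cases i <;> fin_cases j <;> simp

lemma SRmul : Smat * Rmat = -Tmat := by
  ext i j; fin_cases i <;> fin_cases j <;> simp only [mul_coe, Matrix.SpecialLinearGroup.coe_neg] <;>
    simp [mul_coe, Smat, Rmat, Tmat, Matrix.SpecialLinearGroup.coe_neg]
lemma SRRmul : Smat * (Rmat * Rmat) = -Lmat := by
  rw [← mul_assoc]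
  ext i j; fin_cases i <;> fin_cases j <;> simp only [mul_coe, Matrix.SpecialLinearGroup.coe_neg] <;>
    simp [mul_coe, Smat, Rmat, Lmat, Matrix.SpecialLinearGroup.coe_neg]
lemma Ssq : Smat * Smat = -1 := by
  ext i j; fin_cases i <;> fin_cases j <;> simp only [mul_coe] <;>
    simp [mul_coe, Smat, one_coe, Matrix.SpecialLinearGroup.coe_neg]
lemma Rcube : Rmat * (Rmat * Rmat) = -1 := by
  rw [← mul_assoc]
  ext i j; fin_cases i <;> fin_cases j <;> simp only [mul_coe] <;>
    simp [mul_coe, Rmat, one_coe, Matrix.SpecialLinearGroup.coe_neg]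
lemma Tz_mul (x y : ℤ) : Tz x * Tz y = Tz (x + y) := by
  ext i j; fin_cases i <;> fin_cases j <;> simp only [mul_coe] <;> simp [mul_coe, Tz] <;> try ring
lemma Tz_zero : Tz 0 = 1 := by
  ext i j; fin_cases i <;> fin_cases j <;> simp [Tz, one_coe]
lemma Tz_one : Tz 1 = Tmat := by
  ext i j; fin_cases i <;> fin_cases j <;> simp [Tz, Tmat]

/-! ### the positive monoid -/

def Pos (X : SL2) : Prop :=
  1 ≤ X.1 0 0 ∧ 0 ≤ X.1 0 1 ∧ 0 ≤ X.1 1 0 ∧ 1 ≤ X.1 1 1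

def tlev : List Bool → SL2
  | [] => 1
  | b :: u => (if b then Lmat else Tmat) * tlev u

lemma T_mul (X : SL2) (i j : Fin 2) : (Tmat * X).1 i j =
    !![X.1 0 0 + X.1 1 0, X.1 0 1 + X.1 1 1; X.1 1 0, X.1 1 1] i j := by
  rw [mul_coe]; fin_cases i <;> fin_cases j <;> simp [Tmat]
lemma L_mul (X : SL2) (i j : Fin 2) : (Lmat * X).1 i j =
    !![X.1 0 0, X.1 0 1; X.1 0 0 + X.1 1 0, X.1 0 1 + X.1 1 1] i j := by
  rw [mul_coe]; fin_cases i <;> fin_cases j <;> simp [Lmat]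

lemma tlev_pos (u : List Bool) : Pos (tlev u) := by
  induction u with
  | nil => refine ⟨?_, ?_, ?_, ?_⟩ <;> simp [tlev, one_coe]
  | cons b u ih =>
    obtain ⟨h1, h2, h3, h4⟩ := ih
    cases b <;> refine ⟨?_, ?_, ?_, ?_⟩ <;>
      simp [tlev, T_mul, L_mul] <;> omega

lemma tlev_inj : ∀ u v : List Bool, tlev u = tlev v → u = v := by
  intro u
  induction u with
  | nil =>
    intro v h
    cases v with
    | nil => rfl
    | cons b v =>
      exfalso
      obtain ⟨h1, h2, h3, h4⟩ := tlev_pos v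
      have h00 := congrArg (fun X : SL2 => X.1 0 0) h
      have h01 := congrArg (fun X : SL2 => X.1 0 1) h
      have h10 := congrArg (fun X : SL2 => X.1 1 0) h
      have h11 := congrArg (fun X : SL2 => X.1 1 1) h
      cases b <;> simp only [tlev, Matrix.SpecialLinearGroup.coe_mul] at h00 h01 h10 h11 <;>
        simp [tlev, Matrix.mul_apply, Fin.sum_univ_two, Tmat, Lmat, one_coe]
          at h00 h01 h10 h11 <;> omega
  | cons b u ih =>
    intro v h
    cases v with
    | nil =>
      exfalso
      obtain ⟨h1, h2, h3, h4⟩ := tlev_pos u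
      have h00 := congrArg (fun X : SL2 => X.1 0 0) h
      have h01 := congrArg (fun X : SL2 => X.1 0 1) h
      have h10 := congrArg (fun X : SL2 => X.1 1 0) h
      have h11 := congrArg (fun X : SL2 => X.1 1 1) h
      cases b <;> simp only [tlev, Matrix.SpecialLinearGroup.coe_mul] at h00 h01 h10 h11 <;>
        simp [tlev, Matrix.mul_apply, Fin.sum_univ_two, Tmat, Lmat, one_coe]
          at h00 h01 h10 h11 <;> omega
    | cons c v =>
      obtain ⟨h1, h2, h3, h4⟩ := tlev_pos u
      obtain ⟨g1, g2, g3, g4⟩ := tlev_pos v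
      have hbc : b = c := by
        by_contra hbc
        have h00 := congrArg (fun X : SL2 => X.1 0 0) h
        have h10 := congrArg (fun X : SL2 => X.1 1 0) h
        cases b <;> cases c <;> simp at hbc <;>
          simp only [tlev, Matrix.SpecialLinearGroup.coe_mul] at h00 h10 <;>
          simp [tlev, Matrix.mul_apply, Fin.sum_univ_two, Tmat, Lmat] at h00 h10 <;> omega
      subst hbc
      simp only [tlev] at h
      rw [ih _ (mul_left_cancel h)]

/-! ### normal forms -/

def Spow : Bool → SL2
  | true => Smat
  | false => 1
def nf (e : ℕ) (P : SL2) (δ : Bool) : SL2 := Rmat ^ e * P * Spow δ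

set_option maxHeartbeats 1000000 in
lemma nf_inj {e e' : ℕ} (he : e < 3) (he' : e' < 3) {δ δ' : Bool} {P P' : SL2}
    (hP : Pos P) (hP' : Pos P')
    (h : nf e P δ = nf e' P' δ' ∨ nf e P δ = - nf e' P' δ') :
    e = e' ∧ δ = δ' ∧ P = P' := by
  obtain ⟨p1,p2,p3,p4⟩ := hP; obtain ⟨q1,q2,q3,q4⟩ := hP'
  interval_cases e <;> interval_cases e' <;> cases δ <;> cases δ' <;>
    rcases h with h | h <;>
    first
      | exact ⟨rfl, rfl, mul_left_cancel (mul_right_cancel h)⟩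
      | (exfalso
         have e00 := congrArg (fun X : SL2 => X.1 0 0) h
         have e01 := congrArg (fun X : SL2 => X.1 0 1) h
         have e10 := congrArg (fun X : SL2 => X.1 1 0) h
         have e11 := congrArg (fun X : SL2 => X.1 1 1) h
         simp only [nf, Spow, pow_succ, pow_zero, one_mul, mul_one,
           Matrix.SpecialLinearGroup.coe_mul, Matrix.SpecialLinearGroup.coe_neg] at e00 e01 e10 e11
         simp only [nf, Spow, pow_succ, pow_zero, one_mul, mul_one,
           Matrix.SpecialLinearGroup.coe_mul, Matrix.SpecialLinearGroup.coe_neg,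
           Matrix.neg_apply, Matrix.mul_apply, Fin.sum_univ_two, Rmat, Smat,
           Matrix.cons_val', Matrix.cons_val_zero, Matrix.cons_val_one, Matrix.head_cons,
           Matrix.empty_val', Matrix.cons_val_fin_one, Matrix.of_apply,
           Matrix.vecHead, Matrix.vecTail] at e00 e01 e10 e11
         try ring_nf at e00
         try ring_nf at e01
         try ring_nf at e10
         try ring_nf at e11
         omega)

/-! ### words -/

def ev : List Bool → SL2
  | [] => 1
  | c :: w => (if c then Rmat else Smat) * ev w

lemma ev_append (u v : List Bool) : ev (u ++ v) = ev u * ev v := by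
  induction u with
  | nil => simp [ev]
  | cons c u ih => simp [ev, ih, mul_assoc]

def Red (w : List Bool) : Prop :=
  ¬ ([false, false] <:+: w) ∧ ¬ ([true, true, true] <:+: w)

lemma red_tail {c : Bool} {w : List Bool} (h : Red (c :: w)) : Red w := by
  refine ⟨fun hi => h.1 (hi.trans (List.suffix_cons c w).isInfix), fun hi =>
    h.2 (hi.trans (List.suffix_cons c w).isInfix)⟩

lemma not_red_ff (w : List Bool) : ¬ Red (false :: false :: w) := fun h =>
  h.1 ⟨[], w, rfl⟩
lemma not_red_ttt (w : List Bool) : ¬ Red (true :: true :: true :: w) := fun h =>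
  h.2 ⟨[], w, rfl⟩
lemma not_red_fttt (w : List Bool) : ¬ Red (false :: true :: true :: true :: w) := fun h =>
  h.2 ⟨[false], w, rfl⟩

/-! ### parsing -/

def tl : List Bool → List Bool × Bool
  | false :: true :: true :: rest => (true :: (tl rest).1, (tl rest).2)
  | false :: true :: rest => (false :: (tl rest).1, (tl rest).2)
  | false :: _ => ([], true)
  | _ => ([], false)

def dec : List Bool → ℕ × List Bool × Bool
  | true :: w => ((dec w).1 + 1, (dec w).2)
  | w => (0, tl w)

def untl : List Bool → Bool → List Bool
  | [], true => [false]
  | [], false => []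
  | b :: u, δ => (if b then [false,true,true] else [false,true]) ++ untl u δ

def build (t : ℕ × List Bool × Bool) : List Bool :=
  List.replicate t.1 true ++ untl t.2.1 t.2.2

/-- value of a reduced word not starting with `r` -/
lemma tl_ev : ∀ w : List Bool, Red w → w.head? ≠ some true →
    ev w = tlev (tl w).1 * Spow (tl w).2 ∨ ev w = -(tlev (tl w).1 * Spow (tl w).2) := by
  intro w
  induction w using tl.induct with
  | case1 rest ih =>
    intro hred _
    have hrest : Red rest := red_tail (red_tail (red_tail hred))
    have hh : rest.head? ≠ some true := by
      cases rest with
      | nil => simp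
      | cons c r =>
        cases c
        · simp
        · exact absurd hred (not_red_fttt r)
    have hv : ev (false :: true :: true :: rest)
        = Smat * (Rmat * Rmat) * ev rest := by
      simp [ev, mul_assoc]
    rcases ih hrest hh with h | h <;>
      rw [show tl (false :: true :: true :: rest)
            = (true :: (tl rest).1, (tl rest).2) from rfl] <;>
      simp only [hv, SRRmul, h, tlev] <;>
      [right; left] <;> simp [mul_assoc, if_true]
  | case2 rest hne ih =>
    intro hred _
    have hrest : Red rest := red_tail (red_tail hred)
    have hh : rest.head? ≠ some true := by
      cases rest with
      | nil => simp
      | cons c r =>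
        cases c
        · simp
        · exact absurd rfl (hne r)
    have hv : ev (false :: true :: rest) = Smat * Rmat * ev rest := by
      simp [ev, mul_assoc]
    have htl : tl (false :: true :: rest) = (false :: (tl rest).1, (tl rest).2) := by
      cases rest with
      | nil => rfl
      | cons c r =>
        cases c
        · rfl
        · exact absurd rfl (hne r)
    rcases ih hrest hh with h | h <;>
      rw [htl] <;>
      simp only [hv, SRmul, h, tlev] <;>
      [right; left] <;> simp [mul_assoc, if_false]
  | case3 tail h1 h2 =>
    intro hred _
    cases tail with
    | nil => left; simp [ev, tl, tlev, Spow]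
    | cons c r =>
      cases c
      · exact absurd hred (not_red_ff r)
      · exact absurd rfl (h2 r)
  | case4 t h1 h2 h3 =>
    intro hred hh
    cases t with
    | nil => left; simp [ev, tl, tlev, Spow]
    | cons c r =>
      cases c
      · exact absurd rfl (h3 r)
      · exact absurd rfl hh

lemma dec_ev : ∀ w : List Bool, Red w →
    ev w = nf (dec w).1 (tlev (dec w).2.1) (dec w).2.2 ∨
    ev w = - nf (dec w).1 (tlev (dec w).2.1) (dec w).2.2 := by
  intro w
  induction w using dec.induct with
  | case1 w ih =>
    intro hred
    have hw : Red w := red_tail hred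
    have hv : ev (true :: w) = Rmat * ev w := by simp [ev]
    have hd : dec (true :: w) = ((dec w).1 + 1, (dec w).2) := rfl
    rcases ih hw with h | h <;> rw [hd] <;>
      simp only [hv, h, nf, pow_succ'] <;> [left; right] <;>
      simp [mul_assoc]
  | case2 w hne =>
    intro hred
    have hh : w.head? ≠ some true := by
      cases w with
      | nil => simp
      | cons c r =>
        cases c
        · simp
        · exact absurd rfl (hne r)
    have hd : dec w = (0, tl w) := by
      cases w with
      | nil => rfl
      | cons c r =>
        cases c
        · rfl
        · exact absurd rfl (hne r)
    rcases tl_ev w hred hh with h | h <;> rw [hd] <;>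
      simp only [nf, pow_zero, one_mul] <;> [left; right] <;> simpa using h

/-- rebuilding: `untl ∘ tl = id` on reduced words not starting with `r` -/
lemma untl_tl : ∀ w : List Bool, Red w → w.head? ≠ some true →
    untl (tl w).1 (tl w).2 = w := by
  intro w
  induction w using tl.induct with
  | case1 rest ih =>
    intro hred _
    have hrest : Red rest := red_tail (red_tail (red_tail hred))
    have hh : rest.head? ≠ some true := by
      cases rest with
      | nil => simp
      | cons c r =>
        cases c
        · simp
        · exact absurd hred (not_red_fttt r)
    have := ih hrest hh
    rw [show tl (false :: true :: true :: rest)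
          = (true :: (tl rest).1, (tl rest).2) from rfl]
    simp only [untl, if_true]
    simp [this]
  | case2 rest hne ih =>
    intro hred _
    have hrest : Red rest := red_tail (red_tail hred)
    have hh : rest.head? ≠ some true := by
      cases rest with
      | nil => simp
      | cons c r =>
        cases c
        · simp
        · exact absurd rfl (hne r)
    have htl : tl (false :: true :: rest) = (false :: (tl rest).1, (tl rest).2) := by
      cases rest with
      | nil => rfl
      | cons c r =>
        cases c
        · rfl
        · exact absurd rfl (hne r)
    have := ih hrest hh
    rw [htl]
    simp only [untl, if_false]
    simp [this]
  | case3 tail h1 h2 =>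
    intro hred _
    cases tail with
    | nil => rfl
    | cons c r =>
      cases c
      · exact absurd hred (not_red_ff r)
      · exact absurd rfl (h2 r)
  | case4 t h1 h2 h3 =>
    intro hred hh
    cases t with
    | nil => rfl
    | cons c r =>
      cases c
      · exact absurd rfl (h3 r)
      · exact absurd rfl hh

lemma build_dec : ∀ w : List Bool, Red w → build (dec w) = w := by
  intro w
  induction w using dec.induct with
  | case1 w ih =>
    intro hred
    have := ih (red_tail hred)
    rw [show dec (true :: w) = ((dec w).1 + 1, (dec w).2) from rfl]
    simp only [build, List.replicate_succ] at this ⊢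
    simp [this]
  | case2 w hne =>
    intro hred
    have hh : w.head? ≠ some true := by
      cases w with
      | nil => simp
      | cons c r =>
        cases c
        · simp
        · exact absurd rfl (hne r)
    have hd : dec w = (0, tl w) := by
      cases w with
      | nil => rfl
      | cons c r =>
        cases c
        · rfl
        · exact absurd rfl (hne r)
    rw [hd]
    simpa [build] using untl_tl w hred hh

lemma dec_head_eq_zero : ∀ w : List Bool, w.head? ≠ some true → (dec w).1 = 0 := by
  intro w hw
  cases w with
  | nil => rfl
  | cons c r =>
    cases c
    · rfl
    · exact absurd rfl hw

lemma dec_lt_three : ∀ w : List Bool, Red w → (dec w).1 < 3 := by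
  intro w hred
  match w with
  | [] => exact Nat.zero_lt_succ _
  | false :: r => exact Nat.zero_lt_succ _
  | [true] => simp [dec]
  | true :: false :: r =>
    have : (dec (false :: r)).1 = 0 := rfl
    simp [dec, this]
  | [true, true] => simp [dec]
  | true :: true :: false :: r =>
    have : (dec (false :: r)).1 = 0 := rfl
    simp [dec, this]
  | true :: true :: true :: r => exact absurd hred (not_red_ttt r)

/-! ### sign juggling -/

lemma sign_trans {A B C : SL2} (h1 : A = B ∨ A = -B) (h2 : B = C ∨ B = -C) :
    A = C ∨ A = -C := by
  rcases h1 with h1 | h1 <;> rcases h2 with h2 | h2 <;> rw [h1, h2] <;> simp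

lemma sign_symm {A B : SL2} (h : A = B ∨ A = -B) : B = A ∨ B = -A := by
  rcases h with h | h
  · exact Or.inl h.symm
  · exact Or.inr (by rw [h, neg_neg])

/-! ### uniqueness -/

lemma ev_inj {w w' : List Bool} (hw : Red w) (hw' : Red w')
    (h : ev w = ev w' ∨ ev w = - ev w') : w = w' := by
  have hnf := sign_trans (sign_trans (sign_symm (dec_ev w hw)) h) (dec_ev w' hw')
  obtain ⟨he, hδ, hP⟩ := nf_inj (dec_lt_three w hw) (dec_lt_three w' hw')
    (tlev_pos _) (tlev_pos _) hnf
  have hu := tlev_inj _ _ hP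
  have hdec : dec w = dec w' := by
    have h2 : (dec w).2 = (dec w').2 := Prod.ext hu hδ
    exact Prod.ext he h2
  rw [← build_dec w hw, ← build_dec w' hw', hdec]

/-! ### existence -/

lemma ex_Tz : ∀ b : ℤ, ∃ w : List Bool, ev w = Tz b ∨ ev w = - Tz b := by
  intro b
  induction b using Int.induction_on with
  | zero => exact ⟨[], Or.inl (by rw [Tz_zero]; rfl)⟩
  | succ n ih =>
    obtain ⟨w, hw⟩ := ih
    refine ⟨w ++ [false, true], ?_⟩
    have h1 : ev (w ++ [false, true]) = ev w * ev [false, true] := ev_append _ _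
    have hsr : ev [false, true] = -(Tz 1) := by simp [ev, Tz_one, SRmul]
    rcases hw with h | h
    · right; rw [h1, h, hsr, mul_neg, Tz_mul]
    · left; rw [h1, h, hsr, neg_mul_neg, Tz_mul]
  | pred n ih =>
    obtain ⟨w, hw⟩ := ih
    refine ⟨w ++ [true, true, false], ?_⟩
    have h1 : ev (w ++ [true, true, false]) = ev w * ev [true, true, false] :=
      ev_append _ _
    have hrrs : ev [true, true, false] = - Tz (-1) := by
      have h5 : Rmat * (Rmat * (Smat * 1)) = - Tz (-1) := by
        rw [mul_one, ← mul_assoc]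
        ext i j
        fin_cases i <;> fin_cases j <;> simp only [mul_coe, Matrix.SpecialLinearGroup.coe_neg] <;>
          simp [mul_coe, Rmat, Smat, Tz, Matrix.SpecialLinearGroup.coe_neg]
      simpa [ev] using h5
    have harith : (-(n:ℤ)) + -1 = -(n:ℤ) - 1 := by ring
    rcases hw with h | h
    · right; rw [h1, h, hrrs, mul_neg, Tz_mul, harith]
    · left; rw [h1, h, hrrs, neg_mul_neg, Tz_mul, harith]

lemma sl2_eq_of_entries (M : SL2) (x y z t : ℤ) (h00 : M.1 0 0 = x) (h01 : M.1 0 1 = y)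
    (h10 : M.1 1 0 = z) (h11 : M.1 1 1 = t) : M = ⟨!![x,y;z,t], by
      have := M.2; rw [Matrix.det_fin_two] at this
      rw [Matrix.det_fin_two_of, ← h00, ← h01, ← h10, ← h11]; exact this⟩ := by
  ext i j
  fin_cases i <;> fin_cases j <;> simp [h00, h01, h10, h11]

lemma gen : ∀ n : ℕ, ∀ M : SL2, (M.1 1 0).natAbs ≤ n →
    ∃ w : List Bool, ev w = M ∨ ev w = -M := by
  intro n
  induction n with
  | zero =>
    intro M hM
    have hc : M.1 1 0 = 0 := by omega
    have hdet := M.2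
    rw [Matrix.det_fin_two, hc] at hdet
    have had : M.1 0 0 * M.1 1 1 = 1 := by linarith
    rcases Int.mul_eq_one_iff_eq_one_or_neg_one.mp had with ⟨ha, hd⟩ | ⟨ha, hd⟩
    · have hMeq : M = Tz (M.1 0 1) := by
        have := sl2_eq_of_entries M 1 (M.1 0 1) 0 1 ha rfl hc hd
        rw [this]; rfl
      obtain ⟨w, hw⟩ := ex_Tz (M.1 0 1)
      exact ⟨w, by rw [hMeq]; exact hw⟩
    · have hMeq : M = -Tz (-(M.1 0 1)) := by
        have h2 := sl2_eq_of_entries M (-1) (M.1 0 1) 0 (-1) ha rfl hc hd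
        rw [h2]
        ext i j
        fin_cases i <;> fin_cases j <;> simp only [Matrix.SpecialLinearGroup.coe_neg] <;>
          simp [Tz, Matrix.SpecialLinearGroup.coe_neg]
      obtain ⟨w, hw⟩ := ex_Tz (-(M.1 0 1))
      refine ⟨w, ?_⟩
      rw [hMeq]
      rcases hw with h | h
      · exact Or.inr (by rw [h, neg_neg])
      · exact Or.inl h
  | succ n ih =>
    intro M hM
    by_cases hcn : (M.1 1 0).natAbs ≤ n
    · exact ih M hcn
    have hc0 : M.1 1 0 ≠ 0 := by
      intro h
      rw [h] at hcn
      simp at hcn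
    set q := M.1 0 0 / M.1 1 0 with hq
    set M' := Smat * (Tz (-q) * M) with hM'
    have h10 : M'.1 1 0 = M.1 0 0 - M.1 1 0 * q := by
      rw [hM', mul_coe Smat (Tz (-q) * M), mul_coe (Tz (-q)) M]
      simp [Smat, Tz]
      try ring
    have hmod : M.1 0 0 - M.1 1 0 * q = M.1 0 0 % M.1 1 0 := by
      rw [hq, Int.emod_def]
    have h1 := Int.emod_nonneg (M.1 0 0) hc0
    have h2 : M.1 0 0 % M.1 1 0 < |M.1 1 0| := Int.emod_lt_abs _ hc0
    have hlt : (M'.1 1 0).natAbs ≤ n := by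
      rw [h10, hmod]
      rw [Int.abs_eq_natAbs] at h2
      omega
    obtain ⟨w', hw'⟩ := ih M' hlt
    obtain ⟨wq, hwq⟩ := ex_Tz q
    have key : Tz q * (Smat * M') = -M := by
      rw [hM', ← mul_assoc Smat Smat, Ssq]
      rw [show (-1 : SL2) * (Tz (-q) * M) = -(Tz (-q) * M) by simp]
      rw [mul_neg, ← mul_assoc, Tz_mul]
      simp [Tz_zero]
    refine ⟨wq ++ false :: w', ?_⟩
    have hev : ev (wq ++ false :: w') = ev wq * (Smat * ev w') := by
      rw [ev_append]; simp [ev]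
    refine sign_trans (Or.inl hev) ?_
    have step : ev wq * (Smat * ev w') = Tz q * (Smat * M') ∨
        ev wq * (Smat * ev w') = -(Tz q * (Smat * M')) := by
      rcases hwq with hA | hA <;> rcases hw' with hB | hB <;> rw [hA, hB] <;>
        simp [mul_neg, neg_mul]
    refine sign_trans step ?_
    rw [key]
    exact Or.inr rfl

lemma red_nil : Red ([] : List Bool) := by
  constructor <;> simp

lemma evff : ev [false, false] = -1 := by
  have : ev [false, false] = Smat * (Smat * 1) := rfl
  rw [this, mul_one, Ssq]
lemma evttt : ev [true, true, true] = -1 := by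
  have : ev [true, true, true] = Rmat * (Rmat * (Rmat * 1)) := rfl
  rw [this, mul_one, Rcube]

lemma reduce : ∀ n : ℕ, ∀ w : List Bool, w.length ≤ n →
    ∃ w', Red w' ∧ (ev w' = ev w ∨ ev w' = - ev w) := by
  intro n
  induction n with
  | zero =>
    intro w hw
    have : w = [] := List.length_eq_zero_iff.mp (by omega)
    exact ⟨[], red_nil, Or.inl (by rw [this])⟩
  | succ n ih =>
    intro w hw
    by_cases hred : Red w
    · exact ⟨w, hred, Or.inl rfl⟩
    rw [Red] at hred
    rw [not_and_or, not_not, not_not] at hred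
    rcases hred with h | h
    · obtain ⟨x, y, hxy⟩ := h
      have hval : ev w = -(ev (x ++ y)) := by
        rw [← hxy, ev_append, ev_append, ev_append, evff]
        simp [mul_assoc]
      have hlen : (x ++ y).length ≤ n := by
        have := congrArg List.length hxy
        simp at this
        simp
        omega
      obtain ⟨w', hred', hval'⟩ := ih (x ++ y) hlen
      refine ⟨w', hred', sign_trans hval' (Or.inr (by rw [hval, neg_neg]))⟩
    · obtain ⟨x, y, hxy⟩ := h
      have hval : ev w = -(ev (x ++ y)) := by
        rw [← hxy, ev_append, ev_append, ev_append, evttt]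
        simp [mul_assoc]
      have hlen : (x ++ y).length ≤ n := by
        have := congrArg List.length hxy
        simp at this
        simp
        omega
      obtain ⟨w', hred', hval'⟩ := ih (x ++ y) hlen
      refine ⟨w', hred', sign_trans hval' (Or.inr (by rw [hval, neg_neg]))⟩

lemma exists_red (M : SL2) : ∃ w, Red w ∧ (ev w = M ∨ ev w = -M) := by
  obtain ⟨w0, h0⟩ := gen (M.1 1 0).natAbs M le_rfl
  obtain ⟨w, hred, h⟩ := reduce w0.length w0 le_rfl
  exact ⟨w, hred, sign_trans h h0⟩

/-! ### translation to FreeMonoid -/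

lemma phi_eq (l : FreeMonoid SRletter) : phi l = ev (FreeMonoid.toList l) := by
  rw [phi, FreeMonoid.lift_apply]
  generalize FreeMonoid.toList l = L
  induction L with
  | nil => rfl
  | cons c w ih => simp [ev, ih]

lemma isred_iff (w : FreeMonoid SRletter) :
    IsReducedWord w ↔ Red (FreeMonoid.toList w) := Iff.rfl

end SR

/-- For every matrix `M ∈ SL(2,ℤ)` there is exactly one reduced word `w` over `{s,r}`
with `φ(w) = M` or `φ(w) = -M`. -/
theorem unique_reduced_word (M : Matrix.SpecialLinearGroup (Fin 2) ℤ) :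
    ∃! w : FreeMonoid SRletter, IsReducedWord w ∧ (phi w = M ∨ phi w = -M) := by
  obtain ⟨w, hred, hval⟩ := SR.exists_red M
  refine ⟨FreeMonoid.ofList w, ⟨?_, ?_⟩, ?_⟩
  · rw [SR.isred_iff, FreeMonoid.toList_ofList]
    exact hred
  · rw [SR.phi_eq, FreeMonoid.toList_ofList]
    exact hval
  · rintro y ⟨hyred, hyval⟩
    rw [SR.phi_eq] at hyval
    rw [SR.isred_iff] at hyred
    have hy : FreeMonoid.toList y = w :=
      SR.ev_inj hyred hred (SR.sign_trans hyval (SR.sign_symm hval))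
    rw [← FreeMonoid.ofList_toList y, hy]
end

section
/- The group homomorphism f from the free group on two generators a and b to SL(2,ℤ) determined by f(a) = [[1,2],[0,1]] and f(b) = [[1,0],[2,1]] is injective (a monomorphism); in other words, the matrices [[1,2],[0,1]] and [[1,0],[2,1]] freely generate a free subgroup of rank 2 of SL(2,ℤ). -/
/-- The matrix `[[1,2],[0,1]]` as an element of `SL(2,ℤ)`. -/
def Amat : Matrix.SpecialLinearGroup (Fin 2) ℤ :=
  ⟨!![1, 2; 0, 1], by norm_num [Matrix.det_fin_two_of]⟩

/-- The matrix `[[1,0],[2,1]]` as an element of `SL(2,ℤ)`. -/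
def Bmat : Matrix.SpecialLinearGroup (Fin 2) ℤ :=
  ⟨!![1, 0; 2, 1], by norm_num [Matrix.det_fin_two_of]⟩

/-- The homomorphism from the free group on two generators `a = of false`, `b = of true`
to `SL(2,ℤ)` determined by `f(a) = [[1,2],[0,1]]` and `f(b) = [[1,0],[2,1]]`. -/
noncomputable def fHom : FreeGroup Bool →* Matrix.SpecialLinearGroup (Fin 2) ℤ :=
  FreeGroup.lift (fun c => if c then Bmat else Amat)

/-- Nonzero integer vectors in the plane. -/
abbrev PPV := {v : Fin 2 → ℤ // v ≠ 0}

noncomputable instance : MulAction (Matrix.SpecialLinearGroup (Fin 2) ℤ) PPV where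
  smul g v := ⟨(g : Matrix (Fin 2) (Fin 2) ℤ).mulVec v.1, by
    intro h
    apply v.2
    have h2 : ((g⁻¹ : Matrix.SpecialLinearGroup (Fin 2) ℤ) : Matrix (Fin 2) (Fin 2) ℤ).mulVec
        (((g : Matrix (Fin 2) (Fin 2) ℤ)).mulVec v.1) = 0 := by rw [h, Matrix.mulVec_zero]
    rwa [Matrix.mulVec_mulVec, ← Matrix.SpecialLinearGroup.coe_mul, inv_mul_cancel,
      Matrix.SpecialLinearGroup.coe_one, Matrix.one_mulVec] at h2⟩
  one_smul v := Subtype.ext (by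
    show ((1 : Matrix.SpecialLinearGroup (Fin 2) ℤ) : Matrix (Fin 2) (Fin 2) ℤ).mulVec v.1 = v.1
    rw [Matrix.SpecialLinearGroup.coe_one, Matrix.one_mulVec])
  mul_smul g h v := Subtype.ext (by
    show ((g * h : Matrix.SpecialLinearGroup (Fin 2) ℤ) : Matrix (Fin 2) (Fin 2) ℤ).mulVec v.1
      = (g : Matrix (Fin 2) (Fin 2) ℤ).mulVec ((h : Matrix (Fin 2) (Fin 2) ℤ).mulVec v.1)
    rw [Matrix.SpecialLinearGroup.coe_mul, Matrix.mulVec_mulVec])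

lemma PPV_smul_coe (g : Matrix.SpecialLinearGroup (Fin 2) ℤ) (v : PPV) :
    (g • v).1 = (g : Matrix (Fin 2) (Fin 2) ℤ).mulVec v.1 := rfl

/-- Ping-pong set `X` for the generators. -/
def ppX : Bool → Set PPV := fun c =>
  if c then
    {v | v.1 0 = 0 ∨ (0 < v.1 0 ∧ 0 < v.1 1 ∧ v.1 0 ≤ v.1 1) ∨
      (v.1 0 < 0 ∧ v.1 1 < 0 ∧ v.1 1 ≤ v.1 0)}
  else
    {v | v.1 1 = 0 ∨ (0 < v.1 0 ∧ 0 < v.1 1 ∧ v.1 1 < v.1 0) ∨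
      (v.1 0 < 0 ∧ v.1 1 < 0 ∧ v.1 0 < v.1 1)}

/-- Ping-pong set `Y` for the generators. -/
def ppY : Bool → Set PPV := fun c =>
  if c then
    {v | (0 < v.1 0 ∧ v.1 1 < 0 ∧ v.1 1 < -v.1 0) ∨ (v.1 0 < 0 ∧ 0 < v.1 1 ∧ -v.1 0 < v.1 1)}
  else
    {v | (0 < v.1 0 ∧ v.1 1 < 0 ∧ -v.1 0 ≤ v.1 1) ∨ (v.1 0 < 0 ∧ 0 < v.1 1 ∧ v.1 1 ≤ -v.1 0)}

lemma A_smul (v : PPV) :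
    (Amat • v).1 0 = v.1 0 + 2 * v.1 1 ∧ (Amat • v).1 1 = v.1 1 := by
  rw [PPV_smul_coe]
  constructor <;>
    simp [Amat, Matrix.mulVec, dotProduct, Fin.sum_univ_two] <;> ring

lemma B_smul (v : PPV) :
    (Bmat • v).1 0 = v.1 0 ∧ (Bmat • v).1 1 = 2 * v.1 0 + v.1 1 := by
  rw [PPV_smul_coe]
  constructor <;>
    simp [Bmat, Matrix.mulVec, dotProduct, Fin.sum_univ_two] <;> ring

lemma Amat_inv : Amat⁻¹ = (show Matrix.SpecialLinearGroup (Fin 2) ℤ from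
    ⟨!![1, -2; 0, 1], by norm_num [Matrix.det_fin_two_of]⟩) := by
  rw [eq_comm, eq_inv_iff_mul_eq_one]
  ext i j
  rw [Matrix.SpecialLinearGroup.coe_mul]
  fin_cases i <;> fin_cases j <;>
    simp [Amat, Matrix.mul_apply, Fin.sum_univ_two]

lemma Bmat_inv : Bmat⁻¹ = (show Matrix.SpecialLinearGroup (Fin 2) ℤ from
    ⟨!![1, 0; -2, 1], by norm_num [Matrix.det_fin_two_of]⟩) := by
  rw [eq_comm, eq_inv_iff_mul_eq_one]
  ext i j
  rw [Matrix.SpecialLinearGroup.coe_mul]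
  fin_cases i <;> fin_cases j <;>
    simp [Bmat, Matrix.mul_apply, Fin.sum_univ_two]

lemma Ainv_smul (v : PPV) :
    (Amat⁻¹ • v).1 0 = v.1 0 - 2 * v.1 1 ∧ (Amat⁻¹ • v).1 1 = v.1 1 := by
  rw [Amat_inv, PPV_smul_coe]
  constructor <;>
    simp [Matrix.mulVec, dotProduct, Fin.sum_univ_two] <;> ring

lemma Binv_smul (v : PPV) :
    (Bmat⁻¹ • v).1 0 = v.1 0 ∧ (Bmat⁻¹ • v).1 1 = v.1 1 - 2 * v.1 0 := by
  rw [Bmat_inv, PPV_smul_coe]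
  constructor <;>
    simp [Matrix.mulVec, dotProduct, Fin.sum_univ_two] <;> ring

lemma PPV_ne (v : PPV) : v.1 0 ≠ 0 ∨ v.1 1 ≠ 0 := by
  by_contra h
  push_neg at h
  apply v.2
  funext i
  fin_cases i <;> simp [h.1, h.2]

/-- The homomorphism `f` is injective: the matrices `[[1,2],[0,1]]` and `[[1,0],[2,1]]`
freely generate a free subgroup of rank 2 of `SL(2,ℤ)`. -/
theorem fHom_injective : Function.Injective fHom := by
  unfold fHom
  apply FreeGroup.injective_lift_of_ping_pong _ ppX ppY
  · -- nonempty
    intro i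
    cases i
    · exact ⟨⟨![1, 0], by intro h; simpa using congrFun h 0⟩, by simp [ppX]⟩
    · exact ⟨⟨![0, 1], by intro h; simpa using congrFun h 1⟩, by simp [ppX]⟩
  · -- X pairwise disjoint
    intro i j hij
    show Disjoint (ppX i) (ppX j)
    rw [Set.disjoint_left]
    intro v hvi hvj
    have := PPV_ne v
    cases i <;> cases j <;> simp_all [ppX] <;> omega
  · -- Y pairwise disjoint
    intro i j hij
    show Disjoint (ppY i) (ppY j)
    rw [Set.disjoint_left]
    intro v hvi hvj
    cases i <;> cases j <;> simp_all [ppY] <;> omega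
  · -- X i disjoint Y j
    intro i j
    rw [Set.disjoint_left]
    intro v hvi hvj
    cases i <;> cases j <;> simp_all [ppX, ppY] <;> omega
  · -- a i • (Y i)ᶜ ⊆ X i
    intro i v hv
    rw [Set.mem_smul_set] at hv
    obtain ⟨w, hw, rfl⟩ := hv
    have hne := PPV_ne w
    cases i
    · obtain ⟨h0, h1⟩ := A_smul w
      simp only [ppX, ppY, Bool.false_eq_true, ite_false, Set.mem_compl_iff, Set.mem_setOf_eq] at hw ⊢
      rw [h0, h1]
      omega
    · obtain ⟨h0, h1⟩ := B_smul w
      simp only [ppX, ppY, ite_true, Set.mem_compl_iff, Set.mem_setOf_eq] at hw ⊢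
      rw [h0, h1]
      omega
  · -- a⁻¹ i • (X i)ᶜ ⊆ Y i
    intro i v hv
    rw [Pi.inv_apply, Set.mem_smul_set] at hv
    obtain ⟨w, hw, rfl⟩ := hv
    have hne := PPV_ne w
    cases i
    · obtain ⟨h0, h1⟩ := Ainv_smul w
      simp only [ppX, ppY, Bool.false_eq_true, ite_false, Set.mem_compl_iff, Set.mem_setOf_eq] at hw ⊢
      rw [h0, h1]
      omega
    · obtain ⟨h0, h1⟩ := Binv_smul w
      simp only [ppX, ppY, ite_true, Set.mem_compl_iff, Set.mem_setOf_eq] at hw ⊢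
      rw [h0, h1]
      omega
end

section
/- For every l ≥ 1, the matrices M_i = [[1+4i, -8i²],[2, 1-4i]] for 1 ≤ i ≤ l freely generate a free subgroup of SL(2,ℤ) of rank l; that is, the group homomorphism from the free group on l generators z₁, …, z_l to SL(2,ℤ) determined by z_i ↦ M_i is injective. -/
/-- The matrix `M_i = [[1+4i, -8i²],[2, 1-4i]]` as an element of `SL(2,ℤ)`. -/
def Mmat (i : ℕ) : Matrix.SpecialLinearGroup (Fin 2) ℤ :=
  ⟨!![1 + 4 * (i : ℤ), -8 * (i : ℤ) ^ 2; 2, 1 - 4 * (i : ℤ)], by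
    simp [Matrix.det_fin_two_of]; ring⟩

/-- The zpow of `Mmat m` as an explicit element. -/
def Epow (m : ℕ) (k : ℤ) : Matrix.SpecialLinearGroup (Fin 2) ℤ :=
  ⟨!![1 + 4 * (m : ℤ) * k, -8 * (m : ℤ) ^ 2 * k; 2 * k, 1 - 4 * (m : ℤ) * k], by
    simp [Matrix.det_fin_two_of]; ring⟩

lemma Epow_succ (m : ℕ) (k : ℤ) : Epow m (k + 1) = Epow m k * Mmat m := by
  apply Subtype.ext
  show _ = (_ : Matrix (Fin 2) (Fin 2) ℤ) * _
  ext i j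
  fin_cases i <;> fin_cases j <;>
    simp [Epow, Mmat, Matrix.mul_apply, Fin.sum_univ_two] <;> ring

lemma Mmat_zpow (m : ℕ) (k : ℤ) : (Mmat m) ^ k = Epow m k := by
  induction k using Int.induction_on with
  | zero =>
    apply Subtype.ext
    show _ = (_ : Matrix (Fin 2) (Fin 2) ℤ)
    norm_num [Epow]
    ext i j
    fin_cases i <;> fin_cases j <;> simp [Matrix.one_apply]
  | succ n ih => rw [zpow_add_one, ih, Epow_succ]
  | pred n ih =>
    have h2 : Epow m (-(n:ℤ) - 1) * Mmat m = Epow m (-(n:ℤ)) := by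
      rw [← Epow_succ]; ring_nf
    have : (Mmat m) ^ (-(n:ℤ) - 1) * Mmat m = Epow m (-(n:ℤ) - 1) * Mmat m := by
      rw [h2, ← ih, ← zpow_add_one]; ring_nf
    exact mul_right_cancel this

instance : MulAction (Matrix.SpecialLinearGroup (Fin 2) ℤ) (Fin 2 → ℤ) where
  smul A v := (A : Matrix (Fin 2) (Fin 2) ℤ).mulVec v
  one_smul v := show Matrix.mulVec _ _ = _ by simp
  mul_smul A B v := show Matrix.mulVec _ _ = Matrix.mulVec _ (Matrix.mulVec _ _) by
    rw [Matrix.SpecialLinearGroup.coe_mul, Matrix.mulVec_mulVec]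

lemma smul_def' (A : Matrix.SpecialLinearGroup (Fin 2) ℤ) (v : Fin 2 → ℤ) :
    A • v = (A : Matrix (Fin 2) (Fin 2) ℤ).mulVec v := rfl

/-- ping-pong sets -/
def XX (n : ℕ) : Set (Fin 2 → ℤ) :=
  {v | v 1 ≠ 0 ∧ |v 0 - 2 * ((n:ℤ) + 1) * v 1| < |v 1|}

lemma key : Function.Injective (FreeGroup.lift (fun n : ℕ => Mmat (n + 1))) := by
  set a : ℕ → Matrix.SpecialLinearGroup (Fin 2) ℤ := fun n => Mmat (n + 1) with ha
  have : FreeGroup.lift a =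
      (Monoid.CoprodI.lift fun i : ℕ => FreeGroup.lift fun _ : Unit => a i).comp
        (@freeGroupEquivCoprodI ℕ).toMonoidHom := by
    ext i; simp
  rw [this, MonoidHom.coe_comp]
  refine Function.Injective.comp ?_ (MulEquiv.injective freeGroupEquivCoprodI)
  apply Monoid.CoprodI.lift_injective_of_ping_pong _ _ XX
  · -- nonempty
    intro i
    exact ⟨fun j => if j = 0 then 2 * ((i:ℤ) + 1) else 1, by simp [XX]⟩
  · -- disjoint
    intro i j hij
    rw [Function.onFun, Set.disjoint_left]
    rintro v ⟨h1, h2⟩ ⟨h1', h2'⟩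
    have habs : |2 * ((i:ℤ) - j) * v 1| < 2 * |v 1| := by
      calc |2 * ((i:ℤ) - j) * v 1|
          = |(v 0 - 2 * ((j:ℤ) + 1) * v 1) - (v 0 - 2 * ((i:ℤ) + 1) * v 1)| := by ring_nf
        _ ≤ |v 0 - 2 * ((j:ℤ) + 1) * v 1| + |v 0 - 2 * ((i:ℤ) + 1) * v 1| := abs_sub _ _
        _ < 2 * |v 1| := by linarith
    rw [abs_mul, abs_mul] at habs
    have hij' : (1:ℤ) ≤ |(i:ℤ) - j| := by
      have : (i:ℤ) ≠ j := by exact_mod_cast fun h => hij (Nat.cast_injective h)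
      rcases this.lt_or_gt with h | h
      · rw [abs_sub_comm]; rw [abs_of_pos] <;> omega
      · rw [abs_of_pos] <;> omega
    have hv1 : (1:ℤ) ≤ |v 1| := Int.one_le_abs h1
    have h2a : |(2:ℤ)| = 2 := by norm_num
    rw [h2a] at habs
    nlinarith [abs_nonneg ((i:ℤ) - j), abs_nonneg (v 1)]
  · -- ping pong
    intro i j hij h hne
    set k : ℤ := FreeGroup.freeGroupUnitEquivInt h with hk
    have hh : h = FreeGroup.of () ^ k := (FreeGroup.freeGroupUnitEquivInt.left_inv h).symm
    have hk0 : k ≠ 0 := by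
      intro h0
      apply hne
      have : h = FreeGroup.of () ^ (0:ℤ) := by rw [← h0]; exact hh
      simpa using this
    rw [hh]
    intro w hw
    rw [Set.mem_smul_set] at hw
    obtain ⟨v, hv, rfl⟩ := hw
    obtain ⟨h1, h2⟩ := hv
    have hlift : (FreeGroup.lift fun _ : Unit => a i) (FreeGroup.of () ^ k) = Epow (i+1) k := by
      rw [map_zpow, FreeGroup.lift_apply_of, ha, ← Mmat_zpow]
    rw [hlift]
    set m : ℤ := (i:ℤ) + 1 with hm
    have hmc : ((i+1 : ℕ) : ℤ) = m := by push_cast [hm]; ring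
    set x := v 0 with hx
    set y := v 1 with hy
    have hact : (Epow (i+1) k • v) = fun t : Fin 2 =>
        if t = 0 then (1 + 4*m*k) * x + (-8*m^2*k) * y else 2*k*x + (1 - 4*m*k) * y := by
      funext t
      rw [smul_def']
      fin_cases t <;>
        simp [Epow, Matrix.mulVec, dotProduct, Fin.sum_univ_two, hmc] <;> ring
    rw [hact]
    -- basic facts
    set s : ℤ := x - 2*m*y with hs
    have hy1 : (1:ℤ) ≤ |y| := Int.one_le_abs h1
    have hk1 : (1:ℤ) ≤ |k| := Int.one_le_abs hk0
    have hgap : |y| + 1 ≤ |s| := by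
      have hij1 : (1:ℤ) ≤ |(i:ℤ) - j| := by
        have hne' : (i:ℤ) ≠ j := by exact_mod_cast fun hq => hij (Nat.cast_injective hq)
        rcases hne'.lt_or_gt with hq | hq
        · rw [abs_sub_comm, abs_of_pos] <;> omega
        · rw [abs_of_pos] <;> omega
      have h3 : 2 * |(i:ℤ)-j| * |y| ≤ |s| + |x - 2*((j:ℤ)+1)*y| := by
        have := abs_sub (x - 2*((j:ℤ)+1)*y) s
        have heq : (x - 2*((j:ℤ)+1)*y) - s = 2*((i:ℤ)-j)*y := by rw [hs, hm]; ring
        rw [heq, abs_mul, abs_mul] at this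
        have h2a : |(2:ℤ)| = 2 := by norm_num
        rw [h2a] at this
        linarith
      nlinarith [abs_nonneg ((i:ℤ)-j), abs_nonneg y]
    have hw1 : 2*k*x + (1 - 4*m*k) * y = 2*k*s + y := by rw [hs]; ring
    have hlow : 2 * |k| * |s| - |y| ≤ |2*k*s + y| := by
      have hA : |2*k*s| ≤ |2*k*s + y| + |y| := by
        have := abs_sub (2*k*s + y) y
        have heq : (2*k*s + y) - y = 2*k*s := by ring
        rw [heq] at this
        linarith
      have hB : |2*k*s| = 2 * |k| * |s| := by
        rw [abs_mul, abs_mul]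
        norm_num
      linarith [hB ▸ hA]
    have hbig : |s| < |2*k*s + y| := by nlinarith [abs_nonneg s]
    constructor
    · show (if (1 : Fin 2) = 0 then _ else 2*k*x + (1 - 4*m*k) * y) ≠ 0
      rw [if_neg (by decide), hw1]
      intro h0
      rw [h0] at hbig
      simp at hbig
      omega
    · show |(if (0:Fin 2) = 0 then (1 + 4*m*k) * x + (-8*m^2*k) * y else _) -
          2 * ((i:ℤ) + 1) * (if (1:Fin 2) = 0 then _ else 2*k*x + (1 - 4*m*k) * y)| <
          |(if (1:Fin 2) = 0 then _ else 2*k*x + (1 - 4*m*k) * y)|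
      rw [if_pos rfl, if_neg (by decide : ¬ (1:Fin 2) = 0), hw1, ← hm]
      have heq : (1 + 4*m*k) * x + (-8*m^2*k) * y - 2*m*(2*k*s + y) = s := by rw [hs]; ring
      rw [heq]
      exact hbig
  · -- hcard
    left
    rw [Cardinal.mk_nat]
    exact_mod_cast (Cardinal.nat_lt_aleph0 3).le

/-- For every `l ≥ 1`, the matrices `M₁, …, M_l` freely generate a free subgroup of
`SL(2,ℤ)` of rank `l`: the homomorphism from the free group on `l` generators
`z₁, …, z_l` determined by `z_i ↦ M_i` is injective. (Here the generator `z_{i+1}`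
corresponds to `(i : Fin l)`.) -/
theorem Mmat_free (l : ℕ) (hl : 1 ≤ l) :
    Function.Injective (FreeGroup.lift (fun i : Fin l => Mmat ((i : ℕ) + 1))) := by
  have hcomp : FreeGroup.lift (fun i : Fin l => Mmat ((i : ℕ) + 1)) =
      (FreeGroup.lift (fun n : ℕ => Mmat (n + 1))).comp (FreeGroup.map (Fin.val)) := by
    apply FreeGroup.ext_hom
    intro a
    simp
  rw [hcomp, MonoidHom.coe_comp]
  apply key.comp
  set g : ℕ → Fin l := fun n => if h : n < l then ⟨n, h⟩ else ⟨0, hl⟩ with hg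
  have hli : Function.LeftInverse (FreeGroup.map g) (FreeGroup.map (Fin.val : Fin l → ℕ)) := by
    intro x
    rw [FreeGroup.map.comp]
    have : (g ∘ Fin.val : Fin l → Fin l) = id := by
      funext t
      simp [hg, t.isLt]
    rw [this]
    exact FreeGroup.map.id x
  exact hli.injective
end

section
/- Let k ≥ 1 and let s₁, …, s_k be positive integers. In the free group F with free generators g₀, g₁, …, g_k, a, consider the family of 2k elements u_i = g_{i-1} · a^{s_i} · g_i^{-1} and v_i = g_{i-1} · g_i^{-1} for 1 ≤ i ≤ k. Then this family fails to be a code (i.e., there exist two distinct nonempty finite index sequences whose corresponding products in F are equal) if and only if there exist two disjoint nonempty subsets U₁, U₂ ⊆ {1,…,k} with ∑_{i∈U₁} s_i = ∑_{i∈U₂} s_i (i.e., the equal subset sum instance s₁,…,s_k has a solution). -/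
/-- The free group on the `k+2` generators `g₀, …, g_k, a`. -/
abbrev Fgrp (k : ℕ) := FreeGroup (Fin (k + 1) ⊕ Unit)

/-- The generator `g_j`. -/
def gGen {k : ℕ} (j : Fin (k + 1)) : Fgrp k := FreeGroup.of (Sum.inl j)

/-- The generator `a`. -/
def aGen {k : ℕ} : Fgrp k := FreeGroup.of (Sum.inr ())

/-- The family of `2k` elements: `Sum.inl i` indexes `u_{i+1} = g_i · a^{s_{i+1}} · g_{i+1}⁻¹`
and `Sum.inr i` indexes `v_{i+1} = g_i · g_{i+1}⁻¹` (the index `i : Fin k` corresponds to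
the `1`-based index `i+1`, with `s : Fin k → ℕ` listing `s₁, …, s_k`). -/
def fam {k : ℕ} (s : Fin k → ℕ) : Fin k ⊕ Fin k → Fgrp k
  | Sum.inl i => gGen i.castSucc * aGen ^ (s i) * (gGen i.succ)⁻¹
  | Sum.inr i => gGen i.castSucc * (gGen i.succ)⁻¹

namespace NC

variable {k : ℕ}

def idx : Fin k ⊕ Fin k → Fin k := Sum.elim id id

def wt (s : Fin k → ℕ) : Fin k ⊕ Fin k → ℕ := Sum.elim s (fun _ => 0)

abbrev Ltr (k : ℕ) := (Fin (k + 1) ⊕ Unit) × Bool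

def arl : Ltr k := (Sum.inr (), true)

abbrev Blk (k : ℕ) := Fin k × ℕ × Fin k

/-- word of a block -/
def bw (b : Blk k) : List (Ltr k) :=
  (Sum.inl b.1.castSucc, true) :: (List.replicate b.2.1 arl ++ [(Sum.inl b.2.2.succ, false)])

def W (bs : List (Blk k)) : List (Ltr k) := (bs.map bw).flatten

/-- block decomposition of an index list -/
def blocks (s : Fin k → ℕ) : List (Fin k ⊕ Fin k) → List (Blk k)
  | [] => []
  | x :: l =>
    match blocks s l with
    | [] => [(idx x, wt s x, idx x)]
    | (i, e, j) :: bs =>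
      if (idx x).val + 1 = i.val then (idx x, wt s x + e, j) :: bs
      else (idx x, wt s x, idx x) :: (i, e, j) :: bs

theorem aGen_pow (n : ℕ) : (aGen : Fgrp k) ^ n = FreeGroup.mk (List.replicate n arl) := by
  induction n with
  | zero => rw [pow_zero, List.replicate_zero]; rfl
  | succ n ih =>
    rw [pow_succ', List.replicate_succ]
    have : (arl :: List.replicate n arl : List (Ltr k)) = [arl] ++ List.replicate n arl := rfl
    rw [this, ← FreeGroup.mul_mk, ← ih]; rfl

theorem gGen_inv (j : Fin (k+1)) : (gGen j)⁻¹ = FreeGroup.mk [(Sum.inl j, false)] := by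
  show (FreeGroup.mk [(Sum.inl j, true)])⁻¹ = _
  rw [FreeGroup.inv_mk]; rfl

theorem fam_eq (s : Fin k → ℕ) (x : Fin k ⊕ Fin k) :
    fam s x = FreeGroup.mk (bw (idx x, wt s x, idx x)) := by
  have h : ∀ (i : Fin k) (e : ℕ), gGen i.castSucc * aGen ^ e * (gGen i.succ)⁻¹
      = FreeGroup.mk (bw ((i, e, i) : Blk k)) := by
    intro i e
    rw [aGen_pow, gGen_inv]
    show FreeGroup.mk [(Sum.inl i.castSucc, true)] * _ * _ = _
    rw [FreeGroup.mul_mk, FreeGroup.mul_mk]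
    rfl
  cases x with
  | inl i => exact h i (s i)
  | inr i =>
    show gGen i.castSucc * (gGen i.succ)⁻¹ = FreeGroup.mk (bw (i, 0, i))
    simpa using h i 0

theorem mk_cancel (c : Fin (k+1) ⊕ Unit) (A B : List (Ltr k)) :
    FreeGroup.mk (A ++ (c,false) :: (c,true) :: B) = FreeGroup.mk (A ++ B) := by
  have hinv : (FreeGroup.of c)⁻¹ = FreeGroup.mk [(c,false)] := by
    show (FreeGroup.mk [(c,true)])⁻¹ = _
    rw [FreeGroup.inv_mk]; rfl
  have h1 : (A ++ (c,false) :: (c,true) :: B) = A ++ ([(c,false)] ++ ([(c,true)] ++ B)) := rfl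
  rw [h1, ← FreeGroup.mul_mk, ← FreeGroup.mul_mk, ← FreeGroup.mul_mk, ← hinv]
  have h2 : FreeGroup.mk [(c,true)] = FreeGroup.of c := rfl
  rw [h2, ← mul_assoc ((FreeGroup.of c)⁻¹), inv_mul_cancel, one_mul, FreeGroup.mul_mk]

theorem key_cancel (s : Fin k → ℕ) (ix i j : Fin k) (w e : ℕ) (bs : List (Blk k))
    (h : ix.val + 1 = i.val) :
    FreeGroup.mk (bw (ix, w, ix) ++ W ((i, e, j) :: bs)) =
      FreeGroup.mk (W ((ix, w + e, j) :: bs)) := by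
  have hc : (ix.succ : Fin (k+1)) = i.castSucc := by
    apply Fin.ext; simpa using h
  have hL : bw (ix, w, ix) ++ W ((i, e, j) :: bs) =
      ((Sum.inl ix.castSucc, true) :: List.replicate w arl) ++
        (Sum.inl ix.succ, false) :: (Sum.inl i.castSucc, true) ::
          (List.replicate e arl ++ ((Sum.inl j.succ, false) :: W bs)) := by
    simp only [bw, W, List.map_cons, List.flatten_cons, List.cons_append, List.append_assoc,
      List.singleton_append, List.nil_append]
  have hR : W ((ix, w + e, j) :: bs) =
      ((Sum.inl ix.castSucc, true) :: List.replicate w arl) ++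
        (List.replicate e arl ++ ((Sum.inl j.succ, false) :: W bs)) := by
    simp only [bw, W, List.map_cons, List.flatten_cons, List.cons_append, List.append_assoc,
      List.singleton_append, List.nil_append, List.replicate_add]
  rw [hL, hR, hc, mk_cancel]

theorem blocks_cons (s : Fin k → ℕ) (x : Fin k ⊕ Fin k) (l : List (Fin k ⊕ Fin k)) :
    blocks s (x :: l) = match blocks s l with
      | [] => [(idx x, wt s x, idx x)]
      | (i, e, j) :: bs =>
        if (idx x).val + 1 = i.val then (idx x, wt s x + e, j) :: bs
        else (idx x, wt s x, idx x) :: (i, e, j) :: bs := rfl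

theorem prod_eq (s : Fin k → ℕ) (l : List (Fin k ⊕ Fin k)) :
    (l.map (fam s)).prod = FreeGroup.mk (W (blocks s l)) := by
  induction l with
  | nil => rfl
  | cons x l ih =>
    rw [List.map_cons, List.prod_cons, fam_eq, ih]
    rcases hbl : blocks s l with _ | ⟨⟨i, e, j⟩, bs⟩
    · have hb : blocks s (x :: l) = [(idx x, wt s x, idx x)] := by
        rw [blocks_cons, hbl]
      rw [hb, FreeGroup.mul_mk]
      simp [W]
    · by_cases h : (idx x).val + 1 = i.val
      · have hb : blocks s (x :: l) = (idx x, wt s x + e, j) :: bs := by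
          rw [blocks_cons, hbl]; simp [h]
        rw [hb, FreeGroup.mul_mk, key_cancel s _ _ _ _ _ _ h]
      · have hb : blocks s (x :: l) = (idx x, wt s x, idx x) :: (i, e, j) :: bs := by
          rw [blocks_cons, hbl]; simp [h]
        rw [hb, FreeGroup.mul_mk]
        congr 1

/-! ### Reducedness -/

def Rel : Ltr k → Ltr k → Prop := fun p q => ¬(p.1 = q.1 ∧ p.2 = !q.2)

theorem reduce_chain' : ∀ w : List (Ltr k), List.Chain' Rel w → FreeGroup.reduce w = w := by
  intro w h
  induction w with
  | nil => rfl
  | cons x t ih =>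
    cases t with
    | nil => rfl
    | cons y t' =>
      have h2 := List.isChain_cons_cons.mp h
      rw [FreeGroup.reduce.cons, ih h2.2]
      exact if_neg h2.1

def VBlk (bs : List (Blk k)) : Prop :=
  (∀ b ∈ bs, b.1.val ≤ b.2.2.val) ∧
  List.Chain' (fun b b' : Blk k => ¬(b.2.2.val + 1 = b'.1.val)) bs

theorem blocks_head (s : Fin k → ℕ) (x : Fin k ⊕ Fin k) (l : List (Fin k ⊕ Fin k)) :
    ∃ E J bs, blocks s (x :: l) = (idx x, E, J) :: bs := by
  rw [blocks_cons]
  rcases blocks s l with _ | ⟨⟨i, e, j⟩, bs⟩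
  · exact ⟨_, _, _, rfl⟩
  · dsimp only
    by_cases h : (idx x).val + 1 = i.val
    · rw [if_pos h]; exact ⟨_, _, _, rfl⟩
    · rw [if_neg h]; exact ⟨_, _, _, rfl⟩

theorem blocks_valid (s : Fin k → ℕ) (l : List (Fin k ⊕ Fin k)) : VBlk (blocks s l) := by
  induction l with
  | nil => exact ⟨by simp [blocks], List.isChain_nil⟩
  | cons x l ih =>
    rw [blocks_cons]
    rcases hbl : blocks s l with _ | ⟨⟨i, e, j⟩, bs⟩
    · exact ⟨by simp, List.isChain_singleton _⟩
    · rw [hbl] at ih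
      dsimp only
      by_cases h : (idx x).val + 1 = i.val
      · rw [if_pos h]
        have hij : i.val ≤ j.val := ih.1 (i, e, j) (List.mem_cons_self)
        constructor
        · intro b hb
          rcases List.mem_cons.mp hb with rfl | hb
          · show (idx x).val ≤ j.val
            omega
          · exact ih.1 b (List.mem_cons_of_mem _ hb)
        · rcases List.isChain_cons.mp ih.2 with ⟨hrel, hch⟩
          exact List.isChain_cons.mpr ⟨hrel, hch⟩
      · rw [if_neg h]
        constructor
        · intro b hb
          rcases List.mem_cons.mp hb with rfl | hb
          · exact le_refl _
          · exact ih.1 b hb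
        · exact List.isChain_cons_cons.mpr ⟨h, ih.2⟩

theorem chain'_run (e : ℕ) : ∀ (p r : Ltr k), Rel p r → Rel p arl → Rel arl r →
    Rel (arl : Ltr k) arl →
    List.Chain' Rel (p :: (List.replicate e arl ++ [r])) := by
  induction e with
  | zero => intro p r h1 _ _ _; exact List.isChain_pair.mpr h1 |>.imp (fun _ _ => id) |>.imp (fun _ _ => id)
  | succ e ih =>
    intro p r h1 h2 h3 h4
    rw [List.replicate_succ, List.cons_append]
    exact List.isChain_cons_cons.mpr ⟨h2, ih arl r h3 h4 h3 h4⟩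

theorem rel_arl_arl : Rel (arl : Ltr k) arl := by
  simp [Rel, arl]

theorem chain'_bw (i j : Fin k) (e : ℕ) (hij : i.val ≤ j.val) :
    List.Chain' Rel (bw (i, e, j)) := by
  apply chain'_run
  · simp only [Rel]
    rintro ⟨h1, -⟩
    have := Sum.inl.inj h1
    have : i.castSucc.val = j.succ.val := by rw [this]
    simp at this; omega
  · simp [Rel, arl]
  · simp [Rel, arl]
  · exact rel_arl_arl

theorem W_chain' (bs : List (Blk k)) (h : VBlk bs) : List.Chain' Rel (W bs) := by
  induction bs with
  | nil => exact List.isChain_nil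
  | cons b bs ih =>
    obtain ⟨i, e, j⟩ := b
    have hW : W ((i, e, j) :: bs) = bw (i, e, j) ++ W bs := by simp [W]
    rw [hW]
    apply List.IsChain.append
    · exact chain'_bw i j e (h.1 (i, e, j) (List.mem_cons_self))
    · exact ih ⟨fun b hb => h.1 b (List.mem_cons_of_mem _ hb), (List.isChain_cons.mp h.2).2⟩
    · intro x hx y hy
      have hx' : x = (Sum.inl j.succ, false) := by
        have hb : bw ((i, e, j) : Blk k) =
            ((Sum.inl i.castSucc, true) :: List.replicate e arl) ++ [(Sum.inl j.succ, false)] := by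
          simp [bw]
        rw [hb, List.getLast?_concat] at hx
        simp [Option.mem_def] at hx
        exact hx.symm
      rcases bs with _ | ⟨⟨i', e', j'⟩, bs'⟩
      · simp [W] at hy
      · have hy' : y = (Sum.inl i'.castSucc, true) := by
          have hw : W (((i', e', j') : Blk k) :: bs') =
              (Sum.inl i'.castSucc, true) ::
                (List.replicate e' arl ++ (Sum.inl j'.succ, false) :: W bs') := by
            simp [bw, W]
          rw [hw] at hy
          simp [Option.mem_def] at hy
          exact hy.symm
        subst hx' hy'
        have hrel := (List.isChain_cons_cons.mp h.2).1
        simp only [Rel]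
        rintro ⟨h1, -⟩
        apply hrel
        have h2 := Sum.inl.inj h1
        have h3 : j.succ.val = i'.castSucc.val := by rw [h2]
        simpa using h3

theorem repl_eq {α : Type*} (a : α) : ∀ (e₁ e₂ : ℕ) (b₁ b₂ : α) (u₁ u₂ : List α),
    b₁ ≠ a → b₂ ≠ a →
    List.replicate e₁ a ++ b₁ :: u₁ = List.replicate e₂ a ++ b₂ :: u₂ →
    e₁ = e₂ ∧ b₁ = b₂ ∧ u₁ = u₂ := by
  intro e₁
  induction e₁ with
  | zero =>
    intro e₂ b₁ b₂ u₁ u₂ h1 h2 heq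
    cases e₂ with
    | zero => simpa using heq
    | succ e₂ =>
      rw [List.replicate_succ] at heq
      simp at heq
      exact absurd heq.1 h1
  | succ e₁ ih =>
    intro e₂ b₁ b₂ u₁ u₂ h1 h2 heq
    cases e₂ with
    | zero =>
      rw [List.replicate_succ] at heq
      simp at heq
      exact absurd heq.1.symm h2
    | succ e₂ =>
      rw [List.replicate_succ, List.replicate_succ] at heq
      simp only [List.cons_append, List.cons.injEq] at heq
      obtain ⟨h3, h4, h5⟩ := ih e₂ b₁ b₂ u₁ u₂ h1 h2 heq.2
      exact ⟨by omega, h4, h5⟩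

theorem W_inj : ∀ (bs₁ bs₂ : List (Blk k)), W bs₁ = W bs₂ → bs₁ = bs₂ := by
  intro bs₁
  induction bs₁ with
  | nil =>
    intro bs₂ h
    rcases bs₂ with _ | ⟨⟨i, e, j⟩, bs⟩
    · rfl
    · exfalso
      have : (W [] : List (Ltr k)) = [] := rfl
      rw [this] at h
      have : W ((i, e, j) :: bs) = bw (i, e, j) ++ W bs := by simp [W]
      rw [this] at h
      simp [bw, W] at h
  | cons b bs₁ ih =>
    intro bs₂ h
    obtain ⟨i, e, j⟩ := b
    rcases bs₂ with _ | ⟨⟨i', e', j'⟩, bs₂⟩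
    · exfalso
      have h1 : W ((i, e, j) :: bs₁) = bw (i, e, j) ++ W bs₁ := by simp [W]
      rw [h1] at h
      simp [bw, W] at h
    · have h1 : W ((i, e, j) :: bs₁) = bw (i, e, j) ++ W bs₁ := by simp [W]
      have h2 : W ((i', e', j') :: bs₂) = bw (i', e', j') ++ W bs₂ := by simp [W]
      rw [h1, h2] at h
      simp only [bw, List.cons_append, List.cons.injEq, List.append_assoc,
        List.singleton_append] at h
      obtain ⟨hh, ht⟩ := h
      have hii : i = i' := by
        have := Fin.castSucc_inj.mp (Sum.inl.inj (Prod.ext_iff.mp hh).1)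
        exact this
      have := repl_eq arl e e' _ _ _ _ (by simp [arl]) (by simp [arl]) ht
      obtain ⟨hee, hjj, hWW⟩ := this
      have hjj' : j = j' := by
        have := Sum.inl.inj (Prod.ext_iff.mp hjj).1
        exact Fin.succ_inj.mp this
      rw [hii, hee, hjj', ih bs₂ hWW]

/-! ### Runs and subset sums -/

def Sol (s : Fin k → ℕ) : Prop :=
  ∃ U₁ U₂ : Finset (Fin k), U₁.Nonempty ∧ U₂.Nonempty ∧ Disjoint U₁ U₂ ∧
    ∑ i ∈ U₁, s i = ∑ i ∈ U₂, s i

theorem sol_of_ne (s : Fin k → ℕ) (hs : ∀ i, 0 < s i) (U₁ U₂ : Finset (Fin k)) (hne : U₁ ≠ U₂)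
    (hsum : ∑ i ∈ U₁, s i = ∑ i ∈ U₂, s i) : Sol s := by
  have key : ∀ V₁ V₂ : Finset (Fin k), V₁ ≠ V₂ → ∑ i ∈ V₁, s i = ∑ i ∈ V₂, s i →
      (V₁ \ V₂).Nonempty := by
    intro V₁ V₂ hne hsum
    rw [Finset.nonempty_iff_ne_empty]
    intro hempty
    have hsub : V₁ ⊆ V₂ := Finset.sdiff_eq_empty_iff_subset.mp hempty
    have h1 := Finset.sum_inter_add_sum_sdiff V₁ V₂ s
    have h2 := Finset.sum_inter_add_sum_sdiff V₂ V₁ s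
    rw [Finset.inter_comm] at h2
    rw [hempty, Finset.sum_empty] at h1
    have h3 : ∑ i ∈ V₂ \ V₁, s i = 0 := by omega
    have h4 : V₂ \ V₁ = ∅ := by
      rw [Finset.sum_eq_zero_iff] at h3
      rw [Finset.eq_empty_iff_forall_notMem]
      intro i hi
      have := h3 i hi
      have := hs i
      omega
    exact hne (Finset.Subset.antisymm hsub (Finset.sdiff_eq_empty_iff_subset.mp h4))
  refine ⟨U₁ \ U₂, U₂ \ U₁, key U₁ U₂ hne hsum, key U₂ U₁ (Ne.symm hne) hsum.symm,
    disjoint_sdiff_sdiff, ?_⟩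
  have h1 := Finset.sum_inter_add_sum_sdiff U₁ U₂ s
  have h2 := Finset.sum_inter_add_sum_sdiff U₂ U₁ s
  rw [Finset.inter_comm] at h2
  omega

def IsRun (l : List (Fin k ⊕ Fin k)) : Prop :=
  List.Chain' (fun p q => (idx p).val + 1 = (idx q).val) l

def splitRun : List (Fin k ⊕ Fin k) → List (Fin k ⊕ Fin k) × List (Fin k ⊕ Fin k)
  | [] => ([], [])
  | [x] => ([x], [])
  | x :: y :: t =>
    if (idx x).val + 1 = (idx y).val then
      (x :: (splitRun (y :: t)).1, (splitRun (y :: t)).2)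
    else ([x], y :: t)

theorem splitRun_cons₂ (x y : Fin k ⊕ Fin k) (t : List (Fin k ⊕ Fin k)) :
    splitRun (x :: y :: t) =
      if (idx x).val + 1 = (idx y).val then
        (x :: (splitRun (y :: t)).1, (splitRun (y :: t)).2)
      else ([x], y :: t) := rfl

theorem splitRun_spec (s : Fin k → ℕ) : ∀ (t : List (Fin k ⊕ Fin k)) (x : Fin k ⊕ Fin k),
    ∃ c r, splitRun (x :: t) = (x :: c, r) ∧ x :: t = (x :: c) ++ r ∧ IsRun (x :: c) ∧
      blocks s (x :: t) =
        (idx x, ((x :: c).map (wt s)).sum, idx ((x :: c).getLast (by simp))) :: blocks s r := by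
  intro t
  induction t with
  | nil =>
    intro x
    refine ⟨[], [], rfl, rfl, List.isChain_singleton _, ?_⟩
    simp [blocks]
  | cons y t' ih =>
    intro x
    by_cases h : (idx x).val + 1 = (idx y).val
    · obtain ⟨c', r, hsp, happ, hrun, hb⟩ := ih y
      refine ⟨y :: c', r, ?_, ?_, ?_, ?_⟩
      · rw [splitRun_cons₂, if_pos h, hsp]
      · rw [List.cons_append, ← happ]
      · exact List.isChain_cons_cons.mpr ⟨h, hrun⟩
      · rw [blocks_cons, hb]
        dsimp only
        rw [if_pos h]
        simp [List.getLast_cons]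
    · obtain ⟨E, J, bs, hbh⟩ := blocks_head s y t'
      refine ⟨[], y :: t', ?_, rfl, List.isChain_singleton _, ?_⟩
      · rw [splitRun_cons₂, if_neg h]
      · rw [blocks_cons, hbh]
        dsimp only
        rw [if_neg (by simpa using h)]
        rw [← hbh]
        simp [blocks]

theorem blocks_eq_nil_iff (s : Fin k → ℕ) (l : List (Fin k ⊕ Fin k)) :
    blocks s l = [] ↔ l = [] := by
  cases l with
  | nil => simp [blocks]
  | cons x t =>
    obtain ⟨E, J, bs, hb⟩ := blocks_head s x t
    simp [hb]

theorem run_getLast_val : ∀ (t : List (Fin k ⊕ Fin k)) (x : Fin k ⊕ Fin k), IsRun (x :: t) →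
    (idx ((x :: t).getLast (by simp))).val = (idx x).val + t.length := by
  intro t
  induction t with
  | nil => intro x _; rfl
  | cons y t' ih =>
    intro x hrun
    have h2 := List.isChain_cons_cons.mp hrun
    have := ih y h2.2
    rw [List.getLast_cons (by simp : (y :: t') ≠ [])]
    rw [this]
    simp [← h2.1]
    omega

theorem run_map_idx : ∀ (c₁ c₂ : List (Fin k ⊕ Fin k)), IsRun c₁ → IsRun c₂ →
    c₁.length = c₂.length → (c₁.map idx).head? = (c₂.map idx).head? →
    c₁.map idx = c₂.map idx := by
  intro c₁
  induction c₁ with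
  | nil =>
    intro c₂ _ _ hlen _
    cases c₂ with
    | nil => rfl
    | cons y t₂ => simp at hlen
  | cons x t₁ ih =>
    intro c₂ h₁ h₂ hlen hhd
    cases c₂ with
    | nil => simp at hlen
    | cons y t₂ =>
      simp only [List.map_cons, List.head?_cons, Option.some.injEq] at hhd
      cases t₁ with
      | nil =>
        cases t₂ with
        | nil => simp [hhd]
        | cons => simp at hlen
      | cons w t₁' =>
        cases t₂ with
        | nil => simp at hlen
        | cons z t₂' =>
          have hr₁ := List.isChain_cons_cons.mp h₁
          have hr₂ := List.isChain_cons_cons.mp h₂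
          have hwz : idx w = idx z := by
            apply Fin.ext
            rw [← hr₁.1, ← hr₂.1, hhd]
          have := ih (z :: t₂') hr₁.2 hr₂.2 (by simpa using hlen)
            (by simp [hwz])
          simp only [List.map_cons] at this ⊢
          rw [hhd, this]

theorem run_nodup : ∀ (c : List (Fin k ⊕ Fin k)), IsRun c → (c.map idx).Nodup := by
  intro c hrun
  have hlt : List.Chain' (fun p q : Fin k ⊕ Fin k => (idx p).val < (idx q).val) c :=
    hrun.imp (fun a b h => by omega)
  haveI : Trans (fun p q : Fin k ⊕ Fin k => (idx p).val < (idx q).val)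
      (fun p q : Fin k ⊕ Fin k => (idx p).val < (idx q).val)
      (fun p q : Fin k ⊕ Fin k => (idx p).val < (idx q).val) :=
    ⟨fun h1 h2 => lt_trans h1 h2⟩
  have hpw : List.Pairwise (fun p q : Fin k ⊕ Fin k => (idx p).val < (idx q).val) c :=
    List.isChain_iff_pairwise.mp hlt
  rw [List.Nodup, List.pairwise_map]
  exact hpw.imp fun h heq => by rw [heq] at h; exact lt_irrefl _ h

def Uof (c : List (Fin k ⊕ Fin k)) : Finset (Fin k) :=
  (c.filterMap (Sum.elim some fun _ => none)).toFinset

theorem mem_Uof (c : List (Fin k ⊕ Fin k)) (j : Fin k) : j ∈ Uof c ↔ Sum.inl j ∈ c := by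
  simp only [Uof, List.mem_toFinset, List.mem_filterMap]
  constructor
  · rintro ⟨x, hx, hfx⟩
    cases x with
    | inl i => simp at hfx; subst hfx; exact hx
    | inr i => simp at hfx
  · intro h
    exact ⟨Sum.inl j, h, rfl⟩

theorem Uof_sum (s : Fin k → ℕ) : ∀ (c : List (Fin k ⊕ Fin k)), (c.map idx).Nodup →
    ∑ i ∈ Uof c, s i = (c.map (wt s)).sum := by
  intro c
  induction c with
  | nil => simp [Uof]
  | cons x t ih =>
    intro hnd
    simp only [List.map_cons, List.nodup_cons] at hnd
    cases x with
    | inl i =>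
      have hU : Uof (Sum.inl i :: t) = insert i (Uof t) := by
        ext j
        simp [mem_Uof, List.mem_cons, Finset.mem_insert]
      have hni : i ∉ Uof t := by
        intro hi
        rw [mem_Uof] at hi
        exact hnd.1 (by simpa [idx] using List.mem_map_of_mem (f := idx) hi)
      rw [hU, Finset.sum_insert hni, ih hnd.2]
      simp [wt, idx]
    | inr i =>
      have hU : Uof (Sum.inr i :: t) = Uof t := by
        ext j
        simp [mem_Uof, List.mem_cons]
      rw [hU, ih hnd.2]
      simp [wt, idx]

theorem Uof_inj : ∀ (c₁ c₂ : List (Fin k ⊕ Fin k)), c₁.map idx = c₂.map idx →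
    (c₁.map idx).Nodup → Uof c₁ = Uof c₂ → c₁ = c₂ := by
  intro c₁
  induction c₁ with
  | nil =>
    intro c₂ hmap _ _
    cases c₂ with
    | nil => rfl
    | cons => simp at hmap
  | cons x t₁ ih =>
    intro c₂ hmap hnd hU
    cases c₂ with
    | nil => simp at hmap
    | cons y t₂ =>
      simp only [List.map_cons, List.cons.injEq] at hmap
      simp only [List.map_cons, List.nodup_cons] at hnd
      obtain ⟨hixy, hmapt⟩ := hmap
      have hnit₁ : Sum.inl (idx x) ∉ t₁ := fun hc =>
        hnd.1 (by simpa [idx] using List.mem_map_of_mem (f := idx) hc)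
      have hnit₂ : Sum.inl (idx x) ∉ t₂ := fun hc => by
        have : idx x ∈ t₂.map idx := by simpa [idx] using List.mem_map_of_mem (f := idx) hc
        exact hnd.1 (hmapt ▸ this)
      have hmem : (Sum.inl (idx x) ∈ x :: t₁) ↔ (Sum.inl (idx x) ∈ y :: t₂) := by
        rw [← mem_Uof, ← mem_Uof, hU]
      have hxy : x = y := by
        cases x with
        | inl a =>
          cases y with
          | inl b => rw [show a = b from hixy]
          | inr b =>
            exfalso
            have h1 : Sum.inl (idx (Sum.inl a : Fin k ⊕ Fin k)) ∈ (Sum.inl a : Fin k ⊕ Fin k) :: t₁ :=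
              List.mem_cons_self
            have h2 := hmem.mp h1
            rcases List.mem_cons.mp h2 with h | h
            · exact absurd h (by simp)
            · exact hnit₂ h
        | inr a =>
          cases y with
          | inl b =>
            exfalso
            have hab : (idx (Sum.inr a : Fin k ⊕ Fin k)) = b := hixy
            have h1 : Sum.inl (idx (Sum.inr a : Fin k ⊕ Fin k)) ∈ (Sum.inl b : Fin k ⊕ Fin k) :: t₂ := by
              rw [hab]; exact List.mem_cons_self
            have h2 := hmem.mpr h1
            rcases List.mem_cons.mp h2 with h | h
            · exact absurd h (by simp)
            · exact hnit₁ h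
          | inr b => rw [show a = b from hixy]
      subst hxy
      have hUt : Uof t₁ = Uof t₂ := by
        ext j
        rw [mem_Uof, mem_Uof]
        by_cases hj : j = idx x
        · subst hj
          exact ⟨fun h => absurd h hnit₁, fun h => absurd h hnit₂⟩
        · have hne : Sum.inl j ≠ x := by
            intro hc
            apply hj
            rw [← hc]
            rfl
          have hiff : (Sum.inl j ∈ x :: t₁) ↔ (Sum.inl j ∈ x :: t₂) := by
            rw [← mem_Uof, ← mem_Uof, hU]
          simpa [List.mem_cons, hne] using hiff
      rw [ih t₂ hmapt hnd.2 hUt]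

theorem blocks_inj (s : Fin k → ℕ) (hs : ∀ i, 0 < s i) :
    ∀ (n : ℕ) (l₁ l₂ : List (Fin k ⊕ Fin k)), l₁.length ≤ n →
      blocks s l₁ = blocks s l₂ → l₁ = l₂ ∨ Sol s := by
  intro n
  induction n with
  | zero =>
    intro l₁ l₂ hlen heq
    have h1 : l₁ = [] := List.length_eq_zero_iff.mp (Nat.le_zero.mp hlen)
    subst h1
    left
    exact ((blocks_eq_nil_iff s l₂).mp heq.symm).symm
  | succ n ih =>
    intro l₁ l₂ hlen heq
    cases l₁ with
    | nil =>
      left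
      exact ((blocks_eq_nil_iff s l₂).mp heq.symm).symm
    | cons x t₁ =>
      cases l₂ with
      | nil =>
        exfalso
        simpa using (blocks_eq_nil_iff s (x :: t₁)).mp heq
      | cons y t₂ =>
        obtain ⟨c₁, r₁, hsp₁, happ₁, hrun₁, hb₁⟩ := splitRun_spec s t₁ x
        obtain ⟨c₂, r₂, hsp₂, happ₂, hrun₂, hb₂⟩ := splitRun_spec s t₂ y
        rw [hb₁, hb₂] at heq
        simp only [List.cons.injEq, Prod.mk.injEq] at heq
        obtain ⟨⟨hxy, hsum, hlast⟩, hrest⟩ := heq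
        have hlast₁ := run_getLast_val c₁ x hrun₁
        have hlast₂ := run_getLast_val c₂ y hrun₂
        have hlen_eq : c₁.length = c₂.length := by
          have h1 : (idx ((x :: c₁).getLast (by simp))).val =
              (idx ((y :: c₂).getLast (by simp))).val := by rw [hlast]
          rw [hlast₁, hlast₂] at h1
          have h2 : (idx x).val = (idx y).val := by rw [hxy]
          omega
        have hmap : (x :: c₁).map idx = (y :: c₂).map idx :=
          run_map_idx _ _ hrun₁ hrun₂ (by simp [hlen_eq]) (by simp [hxy])
        have hnd₁ := run_nodup _ hrun₁
        have hnd₂ := run_nodup _ hrun₂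
        by_cases hUeq : Uof (x :: c₁) = Uof (y :: c₂)
        · have hceq : x :: c₁ = y :: c₂ := Uof_inj _ _ hmap hnd₁ hUeq
          have hlen₂ : r₁.length ≤ n := by
            have h3 := congrArg List.length happ₁
            simp only [List.length_cons, List.length_append] at h3
            simp only [List.length_cons] at hlen
            omega
          rcases ih r₁ r₂ hlen₂ hrest with h | h
          · left; rw [happ₁, happ₂, hceq, h]
          · right; exact h
        · right
          apply sol_of_ne s hs _ _ hUeq
          rw [Uof_sum s _ hnd₁, Uof_sum s _ hnd₂]
          exact hsum

theorem splitRun_of_run : ∀ (t : List (Fin k ⊕ Fin k)) (x : Fin k ⊕ Fin k),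
    IsRun (x :: t) → splitRun (x :: t) = (x :: t, []) := by
  intro t
  induction t with
  | nil => intro x _; rfl
  | cons y t' ih =>
    intro x h
    have h2 := List.isChain_cons_cons.mp h
    rw [splitRun_cons₂, if_pos h2.1, ih y h2.2]

theorem blocks_of_run (s : Fin k → ℕ) (t : List (Fin k ⊕ Fin k)) (x : Fin k ⊕ Fin k)
    (h : IsRun (x :: t)) :
    blocks s (x :: t) =
      [(idx x, ((x :: t).map (wt s)).sum, idx ((x :: t).getLast (by simp)))] := by
  obtain ⟨c, r, hsp, happ, hrun, hb⟩ := splitRun_spec s t x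
  rw [splitRun_of_run t x h] at hsp
  simp only [Prod.mk.injEq, List.cons.injEq, true_and] at hsp
  obtain ⟨hc, hr⟩ := hsp
  subst hc
  rw [hb, ← hr]
  rfl

end NC

/-- The family `(u_i, v_i)_{1 ≤ i ≤ k}` fails to be a code iff the equal subset sum
instance `s₁, …, s_k` has a solution: two disjoint nonempty subsets of `{1,…,k}` with
equal sums. -/
theorem not_code_iff_equal_subset_sum (k : ℕ) (hk : 1 ≤ k) (s : Fin k → ℕ)
    (hs : ∀ i, 0 < s i) :
    (∃ l₁ l₂ : List (Fin k ⊕ Fin k), l₁ ≠ [] ∧ l₂ ≠ [] ∧ l₁ ≠ l₂ ∧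
        (l₁.map (fam s)).prod = (l₂.map (fam s)).prod) ↔
      (∃ U₁ U₂ : Finset (Fin k), U₁.Nonempty ∧ U₂.Nonempty ∧ Disjoint U₁ U₂ ∧
        ∑ i ∈ U₁, s i = ∑ i ∈ U₂, s i) := by
  constructor
  · rintro ⟨l₁, l₂, h1, h2, hne, heq⟩
    rw [NC.prod_eq, NC.prod_eq] at heq
    have hred := FreeGroup.reduce.sound heq
    rw [NC.reduce_chain' _ (NC.W_chain' _ (NC.blocks_valid s l₁)),
      NC.reduce_chain' _ (NC.W_chain' _ (NC.blocks_valid s l₂))] at hred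
    have hblocks := NC.W_inj _ _ hred
    rcases NC.blocks_inj s hs l₁.length l₁ l₂ le_rfl hblocks with h | h
    · exact absurd h hne
    · exact h
  · rintro ⟨U₁, U₂, hU₁, hU₂, hdisj, hsum⟩
    set f : Finset (Fin k) → Fin k → Fin k ⊕ Fin k :=
      fun U i => if i ∈ U then Sum.inl i else Sum.inr i with hf
    have idx_f : ∀ U i, NC.idx (f U i) = i := by
      intro U i
      by_cases h : i ∈ U <;> simp [hf, h, NC.idx]
    have wt_f : ∀ U i, NC.wt s (f U i) = if i ∈ U then s i else 0 := by
      intro U i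
      by_cases h : i ∈ U <;> simp [hf, h, NC.wt]
    set lU : Finset (Fin k) → List (Fin k ⊕ Fin k) := fun U => (List.finRange k).map (f U)
      with hlU
    -- finRange is nonempty
    obtain ⟨j0, rest, hfr⟩ : ∃ j0 rest, List.finRange k = j0 :: rest := by
      have : List.finRange k ≠ [] := by
        intro hc
        have := congrArg List.length hc
        simp at this
        omega
      exact List.exists_cons_of_ne_nil this
    have hrun : ∀ U, NC.IsRun (lU U) := by
      intro U
      show List.IsChain (fun p q => (NC.idx p).val + 1 = (NC.idx q).val)
        (List.map (f U) (List.finRange k))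
      rw [List.isChain_map, List.isChain_iff_getElem]
      intro i hi
      simp only [idx_f]
      simp [List.getElem_finRange]
    have hblk : ∀ U, NC.blocks s (lU U) =
        [(NC.idx (f U j0), ((lU U).map (NC.wt s)).sum,
          NC.idx ((f U j0 :: rest.map (f U)).getLast (by simp)))] := by
      intro U
      have h1 : lU U = f U j0 :: rest.map (f U) := by rw [hlU]; simp only; rw [hfr]; rfl
      rw [h1]
      rw [NC.blocks_of_run s _ _ (by rw [← h1]; exact hrun U)]
    have hlen : ∀ U, (lU U).length = k := by intro U; simp [hlU]
    have hsumU : ∀ U, ((lU U).map (NC.wt s)).sum = ∑ i ∈ U, s i := by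
      intro U
      rw [hlU]
      simp only [List.map_map]
      have h2 : (NC.wt s) ∘ (f U) = fun i => if i ∈ U then s i else 0 := by
        funext i; exact wt_f U i
      rw [h2, ← Fin.sum_univ_def]
      rw [Finset.sum_ite_mem, Finset.univ_inter]
    have hblkeq : NC.blocks s (lU U₁) = NC.blocks s (lU U₂) := by
      rw [hblk U₁, hblk U₂]
      have hhead : NC.idx (f U₁ j0) = NC.idx (f U₂ j0) := by rw [idx_f, idx_f]
      have hlast : NC.idx ((f U₁ j0 :: rest.map (f U₁)).getLast (by simp)) =
          NC.idx ((f U₂ j0 :: rest.map (f U₂)).getLast (by simp)) := by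
        apply Fin.ext
        have e1 : lU U₁ = f U₁ j0 :: rest.map (f U₁) := by rw [hlU]; simp only; rw [hfr]; rfl
        have e2 : lU U₂ = f U₂ j0 :: rest.map (f U₂) := by rw [hlU]; simp only; rw [hfr]; rfl
        rw [NC.run_getLast_val _ _ (by rw [← e1]; exact hrun U₁),
          NC.run_getLast_val _ _ (by rw [← e2]; exact hrun U₂)]
        rw [idx_f, idx_f]
        simp
      rw [hhead, hlast, hsumU, hsumU, hsum]
    refine ⟨lU U₁, lU U₂, ?_, ?_, ?_, ?_⟩
    · intro hc
      have := congrArg List.length hc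
      rw [hlen U₁] at this
      simp at this
      omega
    · intro hc
      have := congrArg List.length hc
      rw [hlen U₂] at this
      simp at this
      omega
    · obtain ⟨i, hi⟩ := hU₁
      have hi2 : i ∉ U₂ := Finset.disjoint_left.mp hdisj hi
      intro hc
      rw [hlU] at hc
      simp only at hc
      have := List.map_inj_left.mp hc i (List.mem_finRange i)
      rw [hf] at this
      simp only [if_pos hi, if_neg hi2] at this
      exact Sum.inl_ne_inr this
    · rw [NC.prod_eq, NC.prod_eq, hblkeq]
end
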